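/- arXiv:1310.3438 — 4 statements merged into one kernel-verified Lean document; each statement's English description precedes it below -/
import Mathlib

section
/- Let w, v ∈ ℝ^n be positive vectors and s > 0. Over all vectors p' ∈ ℝ^n with p' ≥ 0 and ∑_i p'_i = s, the minimum of max_i w_i/(p'_i v_i) equals (1/s)·∑_i w_i/v_i, and it is attained at p'_i proportional to w_i/v_i (namely p'_i = s·(w_i/v_i)/∑_j (w_j/v_j)). -/
/-- over {p' ≥ 0, ∑ p'_i = s}, the minimum of max_i w_i/(p'_i v_i)
equals (1/s)·∑_i w_i/v_i, attained at p'_i = s·(w_i/v_i)/∑_j (w_j/v_j).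
(For p' with a zero entry the objective is +∞ by convention, so the lower bound
is quantified over strictly positive feasible p'.) -/
theorem nsync_optimal_probabilities
    (n : ℕ) (hn : 0 < n) (w v : Fin n → ℝ)
    (hw : ∀ i, 0 < w i) (hv : ∀ i, 0 < v i)
    (s : ℝ) (hs : 0 < s)
    (pstar : Fin n → ℝ)
    (hpstar : ∀ i, pstar i = s * (w i / v i) / ∑ j, w j / v j) :
    (∀ i, 0 ≤ pstar i) ∧ (∑ i, pstar i = s) ∧
    (Finset.univ.sup' (Finset.univ_nonempty_iff.mpr ⟨⟨0, hn⟩⟩)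
        (fun i => w i / (pstar i * v i)) = (1 / s) * ∑ i, w i / v i) ∧
    (∀ p' : Fin n → ℝ, (∀ i, 0 < p' i) → (∑ i, p' i = s) →
      (1 / s) * ∑ i, w i / v i ≤
        Finset.univ.sup' (Finset.univ_nonempty_iff.mpr ⟨⟨0, hn⟩⟩)
          (fun i => w i / (p' i * v i))) := by
  have hne : (Finset.univ : Finset (Fin n)).Nonempty := Finset.univ_nonempty_iff.mpr ⟨⟨0, hn⟩⟩
  have hT : 0 < ∑ j, w j / v j :=
    Finset.sum_pos (fun j _ => div_pos (hw j) (hv j)) hne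
  set T := ∑ j, w j / v j with hTdef
  refine ⟨?_, ?_, ?_, ?_⟩
  · intro i
    rw [hpstar i]
    exact div_nonneg (mul_nonneg hs.le (div_nonneg (hw i).le (hv i).le)) hT.le
  · have : ∑ i, pstar i = ∑ i, s * (w i / v i) / T := by
      exact Finset.sum_congr rfl fun i _ => hpstar i
    rw [this, ← Finset.sum_div, ← Finset.mul_sum]
    field_simp
    exact hTdef.symm
  · have hconst : ∀ i, w i / (pstar i * v i) = (1 / s) * T := by
      intro i
      rw [hpstar i]
      have hwi := hw i; have hvi := hv i
      field_simp
    rw [show (fun i => w i / (pstar i * v i)) = fun _ => (1 / s) * T from funext hconst]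
    exact Finset.sup'_const hne _
  · intro p' hp hsum
    set M := Finset.univ.sup' hne (fun i => w i / (p' i * v i)) with hM
    have hkey : ∀ i, w i / v i ≤ M * p' i := by
      intro i
      have hle : w i / (p' i * v i) ≤ M := Finset.le_sup' (fun i => w i / (p' i * v i)) (Finset.mem_univ i)
      have hpv : 0 < p' i * v i := mul_pos (hp i) (hv i)
      have h2 := (div_le_iff₀ hpv).mp hle
      rw [div_le_iff₀ (hv i)]
      calc w i ≤ M * (p' i * v i) := h2
        _ = M * p' i * v i := by ring
    have hTle : T ≤ M * s := by
      calc T = ∑ i, w i / v i := rfl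
        _ ≤ ∑ i, M * p' i := Finset.sum_le_sum fun i _ => hkey i
        _ = M * s := by rw [← Finset.mul_sum, hsum]
    calc (1/s) * T ≤ (1/s) * (M * s) := by
            apply mul_le_mul_of_nonneg_left hTle
            positivity
      _ = M := by field_simp
end

section
/- Let φ : ℝ^n → ℝ be differentiable with minimum φ*, let Ŝ be a random subset of [n] with marginals p_i > 0, and let w ∈ ℝ^n be positive. Assume the ESO inequality E[φ(x + h_[Ŝ])] ≤ φ(x) + ∑_i p_i ∇_i φ(x) h_i + (1/2)∑_i p_i w_i h_i² holds for all x, h, and that φ is γ-strongly convex with respect to ‖·‖_v with v > 0. Let Λ = max_i w_i/(p_i v_i) and μ = γ/Λ. Then for the NSync iterates x^{k+1} = x^k − ∑_{i ∈ Ŝ_k} (1/w_i) ∇_i φ(x^k) e^i (with Ŝ_k i.i.d. copies of Ŝ), one has E[φ(x^{k+1}) − φ* | x^k] ≤ (1 − μ)(φ(x^k) − φ*). -/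
lemma fderiv_expand' (n : ℕ) (L : (Fin n → ℝ) →L[ℝ] ℝ) (h : Fin n → ℝ) :
    L h = ∑ i, h i * L (Pi.single i 1) := by
  have hh : h = ∑ i, h i • (Pi.single i 1 : Fin n → ℝ) := by
    ext j
    simp [Pi.single_apply]
  conv_lhs => rw [hh]
  rw [map_sum]
  simp [smul_eq_mul]

/-- one step of NSync, conditionally on the current iterate x,
contracts the expected residual by the factor (1−μ), μ = γ/Λ.
The expectation over the sampling Ŝ is written as a sum over all subsets S
weighted by their probabilities P S; h_[S] is h restricted to S. -/
theorem nsync_one_step_contraction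
    (n : ℕ) (hn : 0 < n)
    (P : Finset (Fin n) → ℝ) (hP : ∀ S, 0 ≤ P S)
    (hsum : ∑ S : Finset (Fin n), P S = 1)
    (p : Fin n → ℝ)
    (hpdef : ∀ i, p i = ∑ S ∈ Finset.univ.filter (fun S : Finset (Fin n) => i ∈ S), P S)
    (hp : ∀ i, 0 < p i)
    (w v : Fin n → ℝ) (hw : ∀ i, 0 < w i) (hv : ∀ i, 0 < v i)
    (φ : (Fin n → ℝ) → ℝ) (hφ : Differentiable ℝ φ)
    (φstar : ℝ) (xstar : Fin n → ℝ) (hmin : ∀ x, φ xstar ≤ φ x)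
    (hφstar : φstar = φ xstar)
    (hESO : ∀ x h : Fin n → ℝ,
      (∑ S : Finset (Fin n), P S * φ (x + fun i => if i ∈ S then h i else 0))
        ≤ φ x + (∑ i, p i * fderiv ℝ φ x (Pi.single i 1) * h i)
            + 1 / 2 * ∑ i, (p i * w i) * h i ^ 2)
    (γ : ℝ) (hγ : 0 < γ)
    (hsc : ∀ x h : Fin n → ℝ,
      φ (x + h) ≥ φ x + fderiv ℝ φ x h + γ / 2 * ∑ i, v i * h i ^ 2)
    (Λ : ℝ)
    (hΛ : Λ = Finset.univ.sup' (Finset.univ_nonempty_iff.mpr ⟨⟨0, hn⟩⟩)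
      (fun i => w i / (p i * v i)))
    (μ : ℝ) (hμ : μ = γ / Λ) :
    ∀ x : Fin n → ℝ,
      (∑ S : Finset (Fin n),
          P S * (φ (x + fun i => if i ∈ S then -(1 / w i) * fderiv ℝ φ x (Pi.single i 1) else 0)
                  - φstar))
        ≤ (1 - μ) * (φ x - φstar) := by
  intro x
  set g : Fin n → ℝ := fun i => fderiv ℝ φ x (Pi.single i 1) with hg
  -- Λ bounds
  have hΛge : ∀ i, w i / (p i * v i) ≤ Λ := by
    intro i
    rw [hΛ]
    exact Finset.le_sup' (f := fun i => w i / (p i * v i)) (Finset.mem_univ i)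
  have hΛpos : 0 < Λ := by
    have i0 : Fin n := ⟨0, hn⟩
    have h0 : 0 < w i0 / (p i0 * v i0) := div_pos (hw i0) (mul_pos (hp i0) (hv i0))
    linarith [hΛge i0]
  have hμpos : 0 < μ := by rw [hμ]; positivity
  -- Step 1: strong convexity bound
  have hsc' : φ x - φstar ≤ ∑ i, g i ^ 2 / (2 * γ * v i) := by
    have h1 := hsc x (xstar - x)
    have h2 : x + (xstar - x) = xstar := by ring
    rw [h2, ← hφstar] at h1
    have h3 : (fderiv ℝ φ x) (xstar - x) = ∑ i, (xstar i - x i) * g i := by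
      rw [fderiv_expand' n (fderiv ℝ φ x) (xstar - x)]
      simp [hg]
    rw [h3] at h1
    have key : -(∑ i, g i ^ 2 / (2 * γ * v i))
        ≤ (∑ i, (xstar i - x i) * g i) + γ / 2 * ∑ i, v i * (xstar - x) i ^ 2 := by
      have : 0 ≤ ∑ i, ((xstar i - x i) * g i + γ / 2 * (v i * (xstar - x) i ^ 2)
          + g i ^ 2 / (2 * γ * v i)) := by
        apply Finset.sum_nonneg
        intro i _
        have hvi := hv i
        have hd : (xstar - x) i = xstar i - x i := rfl
        rw [hd]
        have h4 : 0 ≤ (γ * v i * (xstar i - x i) + g i) ^ 2 := sq_nonneg _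
        have h5 : 0 < γ * v i := mul_pos hγ hvi
        have h6 : (0:ℝ) < 2 * γ * v i := by positivity
        have heq : g i ^ 2 / (2 * γ * v i) * (2 * γ * v i) = g i ^ 2 :=
          div_mul_cancel₀ _ (ne_of_gt h6)
        nlinarith [h4, h5, h6, heq,
          div_nonneg (sq_nonneg (g i)) (le_of_lt h6)]
      rw [Finset.sum_add_distrib, Finset.sum_add_distrib, ← Finset.mul_sum] at this
      linarith
    linarith
  -- Step 3: μ bound
  have hμbound : μ * (φ x - φstar) ≤ 1 / 2 * ∑ i, (p i / w i) * g i ^ 2 := by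
    have h6 : μ * (φ x - φstar) ≤ μ * ∑ i, g i ^ 2 / (2 * γ * v i) :=
      mul_le_mul_of_nonneg_left hsc' (le_of_lt hμpos)
    have h7 : μ * ∑ i, g i ^ 2 / (2 * γ * v i) ≤ 1 / 2 * ∑ i, (p i / w i) * g i ^ 2 := by
      rw [Finset.mul_sum, Finset.mul_sum]
      apply Finset.sum_le_sum
      intro i _
      have hwi := hw i; have hpi := hp i; have hvi := hv i
      have h8 : w i ≤ Λ * (p i * v i) := by
        have := hΛge i
        rw [div_le_iff₀ (by positivity)] at this
        linarith
      rw [hμ, div_mul_eq_mul_div, div_le_iff₀ (by positivity)]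
      have hΛ' : Λ ≠ 0 := ne_of_gt hΛpos
      rw [div_eq_mul_inv, div_eq_mul_inv]
      field_simp
      have := mul_le_mul_of_nonneg_left h8 (sq_nonneg (g i))
      nlinarith [sq_nonneg (g i), mul_pos hpi hvi, mul_nonneg (sq_nonneg (g i)) (le_of_lt hγ)]
    linarith
  -- Step 4: ESO
  have hESO' := hESO x (fun i => -(1 / w i) * g i)
  have e1 : (∑ i, p i * g i * (-(1 / w i) * g i)) = -∑ i, (p i / w i) * g i ^ 2 := by
    rw [← Finset.sum_neg_distrib]
    apply Finset.sum_congr rfl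
    intro i _
    ring
  have e2 : (∑ i, (p i * w i) * (-(1 / w i) * g i) ^ 2) = ∑ i, (p i / w i) * g i ^ 2 := by
    apply Finset.sum_congr rfl
    intro i _
    have hwne : w i ≠ 0 := (hw i).ne'
    field_simp
  rw [e1, e2] at hESO'
  -- LHS rearrangement
  have lhs_eq : (∑ S : Finset (Fin n),
        P S * (φ (x + fun i => if i ∈ S then -(1 / w i) * g i else 0) - φstar))
      = (∑ S : Finset (Fin n),
        P S * φ (x + fun i => if i ∈ S then -(1 / w i) * g i else 0)) - φstar := by
    simp_rw [mul_sub]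
    rw [Finset.sum_sub_distrib, ← Finset.sum_mul, hsum, one_mul]
  calc (∑ S : Finset (Fin n),
        P S * (φ (x + fun i => if i ∈ S then -(1 / w i) * g i else 0) - φstar))
      = (∑ S : Finset (Fin n),
        P S * φ (x + fun i => if i ∈ S then -(1 / w i) * g i else 0)) - φstar := lhs_eq
    _ ≤ (φ x + -∑ i, (p i / w i) * g i ^ 2 + 1 / 2 * ∑ i, (p i / w i) * g i ^ 2) - φstar := by
        linarith
    _ = (φ x - φstar) - 1 / 2 * ∑ i, (p i / w i) * g i ^ 2 := by ring
    _ ≤ (φ x - φstar) - μ * (φ x - φstar) := by linarith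
    _ = (1 - μ) * (φ x - φstar) := by ring
end

section
/- Under the assumptions of the previous statement (ESO with parameters p, w; γ-strong convexity w.r.t. ‖·‖_v; Λ = max_i w_i/(p_i v_i)), for any x^0, 0 < ε < φ(x^0) − φ*, and 0 < ρ < 1, if K ≥ (Λ/γ)·log((φ(x^0) − φ*)/(ε ρ)), then Prob(φ(x^K) − φ* ≤ ε) ≥ 1 − ρ, where x^K is the K-th NSync iterate. -/
noncomputable def nsyncY {n : ℕ} (w : Fin n → ℝ) (φ : (Fin n → ℝ) → ℝ) (x0 : Fin n → ℝ) :
    (k : ℕ) → (Fin k → Finset (Fin n)) → (Fin n → ℝ)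
  | 0, _ => x0
  | (k+1), t =>
      let x := nsyncY w φ x0 k (fun j => t j.castSucc)
      x + fun i => if i ∈ t (Fin.last k) then -(1 / w i) * fderiv ℝ φ x (Pi.single i 1) else 0

lemma fderiv_pi_apply {n : ℕ} (φ : (Fin n → ℝ) → ℝ) (x h : Fin n → ℝ) :
    fderiv ℝ φ x h = ∑ i, h i * fderiv ℝ φ x (Pi.single i 1) := by
  have hh : h = ∑ i, h i • (Pi.single i 1 : Fin n → ℝ) := by
    funext j
    simp [Finset.sum_apply, Pi.single_apply, Finset.sum_ite_eq]
  conv_lhs => rw [hh]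
  rw [map_sum]
  simp [smul_eq_mul]

lemma nsync_claimA {n : ℕ} (P : Finset (Fin n) → ℝ) (hP : ∀ S, 0 ≤ P S)
    (hsum : ∑ S : Finset (Fin n), P S = 1)
    (p w v : Fin n → ℝ) (hp : ∀ i, 0 < p i) (hw : ∀ i, 0 < w i) (hv : ∀ i, 0 < v i)
    (φ : (Fin n → ℝ) → ℝ)
    (φstar : ℝ) (xstar : Fin n → ℝ) (hmin : ∀ x, φ xstar ≤ φ x) (hφstar : φstar = φ xstar)
    (hESO : ∀ x h : Fin n → ℝ,
      (∑ T : Finset (Fin n), P T * φ (x + fun i => if i ∈ T then h i else 0))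
        ≤ φ x + (∑ i, p i * fderiv ℝ φ x (Pi.single i 1) * h i)
            + 1 / 2 * ∑ i, (p i * w i) * h i ^ 2)
    (γ : ℝ) (hγ : 0 < γ)
    (hsc : ∀ x h : Fin n → ℝ,
      φ (x + h) ≥ φ x + fderiv ℝ φ x h + γ / 2 * ∑ i, v i * h i ^ 2)
    (Λ : ℝ) (hΛpos : 0 < Λ) (hΛi : ∀ i, w i / (p i * v i) ≤ Λ)
    (x : Fin n → ℝ) :
    ∑ T : Finset (Fin n), P T *
        (φ (x + fun i => if i ∈ T then -(1 / w i) * fderiv ℝ φ x (Pi.single i 1) else 0) - φstar)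
      ≤ (1 - γ / Λ) * (φ x - φstar) := by
  set Sg : ℝ := ∑ i, (p i / w i) * (fderiv ℝ φ x (Pi.single i 1)) ^ 2 with hSg
  set Sv : ℝ := ∑ i, (1 / v i) * (fderiv ℝ φ x (Pi.single i 1)) ^ 2 with hSv
  -- ESO consequence
  have A1 : ∑ T : Finset (Fin n),
      P T * φ (x + fun i => if i ∈ T then -(1 / w i) * fderiv ℝ φ x (Pi.single i 1) else 0)
        ≤ φ x - 1 / 2 * Sg := by
    have h1 := hESO x (fun i => -(1 / w i) * fderiv ℝ φ x (Pi.single i 1))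
    have e1 : ∑ i, p i * fderiv ℝ φ x (Pi.single i 1) *
        (-(1 / w i) * fderiv ℝ φ x (Pi.single i 1)) = -Sg := by
      rw [hSg, ← Finset.sum_neg_distrib]
      refine Finset.sum_congr rfl fun i _ => ?_
      have hwi : w i ≠ 0 := (hw i).ne'
      field_simp
      try ring
      try tauto
    have e2 : ∑ i, (p i * w i) * (-(1 / w i) * fderiv ℝ φ x (Pi.single i 1)) ^ 2 = Sg := by
      rw [hSg]
      refine Finset.sum_congr rfl fun i _ => ?_
      have hwi : w i ≠ 0 := (hw i).ne'
      field_simp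
    rw [e1, e2] at h1
    linarith
  -- strong convexity consequence
  have A2 : 2 * γ * (φ x - φstar) ≤ Sv := by
    have h2 := hsc x (xstar - x)
    have hxx : x + (xstar - x) = xstar := by abel
    rw [hxx, fderiv_pi_apply] at h2
    have key : -(1 / (2 * γ)) * Sv ≤
        (∑ i, (xstar - x) i * fderiv ℝ φ x (Pi.single i 1))
          + γ / 2 * ∑ i, v i * (xstar - x) i ^ 2 := by
      have step : -(1 / (2 * γ)) * Sv ≤ ∑ i, ((xstar - x) i * fderiv ℝ φ x (Pi.single i 1)
          + γ / 2 * (v i * (xstar - x) i ^ 2)) := by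
        rw [hSv, Finset.mul_sum]
        refine Finset.sum_le_sum fun i _ => ?_
        have hvi := hv i
        have heq : (xstar - x) i * fderiv ℝ φ x (Pi.single i 1)
            + γ / 2 * (v i * (xstar - x) i ^ 2)
            + 1 / (2 * γ) * (1 / v i * (fderiv ℝ φ x (Pi.single i 1)) ^ 2)
            = (γ * v i * (xstar - x) i + fderiv ℝ φ x (Pi.single i 1)) ^ 2 / (2 * γ * v i) := by
          field_simp
          ring
        have hpos : 0 ≤ (γ * v i * (xstar - x) i
            + fderiv ℝ φ x (Pi.single i 1)) ^ 2 / (2 * γ * v i) := by positivity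
        linarith [heq ▸ hpos]
      rw [Finset.sum_add_distrib, ← Finset.mul_sum] at step
      exact step
    have h5 : φ x + -(1 / (2 * γ)) * Sv ≤ φstar := by
      rw [hφstar]; linarith [key, h2]
    have h7 : (φ x - φstar) * (2 * γ) ≤ Sv := by
      rw [← le_div_iff₀ (by positivity : (0:ℝ) < 2 * γ)]
      have : Sv / (2 * γ) = 1 / (2 * γ) * Sv := by ring
      rw [this]
      linarith
    nlinarith [h7]
  -- Λ bound
  have A3 : Sv ≤ Λ * Sg := by
    rw [hSv, hSg, Finset.mul_sum]
    refine Finset.sum_le_sum fun i _ => ?_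
    have h3 := hΛi i
    have hpv : 0 < p i * v i := mul_pos (hp i) (hv i)
    rw [div_le_iff₀ hpv] at h3
    have hg2 : (0:ℝ) ≤ (fderiv ℝ φ x (Pi.single i 1)) ^ 2 := sq_nonneg _
    rw [show (1:ℝ) / v i * (fderiv ℝ φ x (Pi.single i 1)) ^ 2
        = (fderiv ℝ φ x (Pi.single i 1)) ^ 2 / v i from by ring,
      show Λ * (p i / w i * (fderiv ℝ φ x (Pi.single i 1)) ^ 2)
        = (Λ * p i * (fderiv ℝ φ x (Pi.single i 1)) ^ 2) / w i from by ring,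
      div_le_div_iff₀ (hv i) (hw i)]
    nlinarith [h3, hg2]
  have h4 : γ / Λ * (φ x - φstar) ≤ Sg / 2 := by
    rw [div_mul_eq_mul_div, div_le_div_iff₀ hΛpos two_pos]
    nlinarith [A2, A3]
  have e3 : ∑ T : Finset (Fin n),
      P T * (φ (x + fun i => if i ∈ T then -(1 / w i) * fderiv ℝ φ x (Pi.single i 1) else 0) - φstar)
      = (∑ T : Finset (Fin n), P T * φ (x + fun i => if i ∈ T then
          -(1 / w i) * fderiv ℝ φ x (Pi.single i 1) else 0)) - φstar := by
    simp only [mul_sub, Finset.sum_sub_distrib, ← Finset.sum_mul, hsum, one_mul]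
  have expand : (1 - γ / Λ) * (φ x - φstar) = (φ x - φstar) - γ / Λ * (φ x - φstar) := by ring
  linarith [e3, A1, h4, expand.le]

open MeasureTheory

/-- Theorem 1 of the NSync paper: under the ESO and strong
convexity assumptions, K ≥ (Λ/γ)·log((φ(x⁰)−φ*)/(ερ)) iterations of NSync
suffice to reach an ε-accurate solution with probability at least 1−ρ.
The i.i.d. samplings Ŝ_k are modeled as independent random variables
S k : Ω → Finset (Fin n), each with law P. -/
theorem nsync_main_complexity
    (n : ℕ) (hn : 0 < n)
    {Ω : Type*} [MeasurableSpace Ω] (μpr : Measure Ω) [IsProbabilityMeasure μpr]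
    (P : Finset (Fin n) → ℝ) (hP : ∀ S, 0 ≤ P S)
    (hsum : ∑ S : Finset (Fin n), P S = 1)
    (S : ℕ → Ω → Finset (Fin n))
    (hlaw : ∀ k T, (μpr {ω | S k ω = T}).toReal = P T)
    (hind : ProbabilityTheory.iIndepFun
      (m := fun _ : ℕ => (⊤ : MeasurableSpace (Finset (Fin n)))) S μpr)
    (p : Fin n → ℝ)
    (hpdef : ∀ i, p i = ∑ T ∈ Finset.univ.filter (fun T : Finset (Fin n) => i ∈ T), P T)
    (hp : ∀ i, 0 < p i)
    (w v : Fin n → ℝ) (hw : ∀ i, 0 < w i) (hv : ∀ i, 0 < v i)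
    (φ : (Fin n → ℝ) → ℝ) (hφ : Differentiable ℝ φ)
    (φstar : ℝ) (xstar : Fin n → ℝ) (hmin : ∀ x, φ xstar ≤ φ x)
    (hφstar : φstar = φ xstar)
    (hESO : ∀ x h : Fin n → ℝ,
      (∑ T : Finset (Fin n), P T * φ (x + fun i => if i ∈ T then h i else 0))
        ≤ φ x + (∑ i, p i * fderiv ℝ φ x (Pi.single i 1) * h i)
            + 1 / 2 * ∑ i, (p i * w i) * h i ^ 2)
    (γ : ℝ) (hγ : 0 < γ)
    (hsc : ∀ x h : Fin n → ℝ,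
      φ (x + h) ≥ φ x + fderiv ℝ φ x h + γ / 2 * ∑ i, v i * h i ^ 2)
    (Λ : ℝ)
    (hΛ : Λ = Finset.univ.sup' (Finset.univ_nonempty_iff.mpr ⟨⟨0, hn⟩⟩)
      (fun i => w i / (p i * v i)))
    (x0 : Fin n → ℝ)
    (X : ℕ → Ω → (Fin n → ℝ))
    (hX0 : ∀ ω, X 0 ω = x0)
    (hXrec : ∀ k ω, X (k + 1) ω = X k ω +
      fun i => if i ∈ S k ω then -(1 / w i) * fderiv ℝ φ (X k ω) (Pi.single i 1) else 0)
    (ε ρ : ℝ) (hε : 0 < ε) (hεφ : ε < φ x0 - φstar) (hρ0 : 0 < ρ) (hρ1 : ρ < 1)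
    (K : ℕ) (hK : (Λ / γ) * Real.log ((φ x0 - φstar) / (ε * ρ)) ≤ K) :
    1 - ρ ≤ (μpr {ω | φ (X K ω) - φstar ≤ ε}).toReal := by
  classical
  have hC : 0 < φ x0 - φstar := lt_trans hε hεφ
  have hΛpos : 0 < Λ := by
    rw [hΛ]
    refine lt_of_lt_of_le ?_ (Finset.le_sup' _ (Finset.mem_univ ⟨0, hn⟩))
    exact div_pos (hw _) (mul_pos (hp _) (hv _))
  have hΛi : ∀ i, w i / (p i * v i) ≤ Λ := fun i => hΛ ▸ Finset.le_sup' (fun i => w i / (p i * v i)) (Finset.mem_univ i)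
  have claimA : ∀ x : Fin n → ℝ, ∑ T : Finset (Fin n), P T *
        (φ (x + fun i => if i ∈ T then -(1 / w i) * fderiv ℝ φ x (Pi.single i 1) else 0) - φstar)
      ≤ (1 - γ / Λ) * (φ x - φstar) :=
    fun x => nsync_claimA P hP hsum p w v hp hw hv φ φstar xstar hmin hφstar hESO γ hγ hsc
      Λ hΛpos hΛi x
  -- γ/Λ ≤ 1
  have h01 : 0 ≤ 1 - γ / Λ := by
    have h0 : 0 ≤ ∑ T : Finset (Fin n), P T *
        (φ (x0 + fun i => if i ∈ T then -(1 / w i) * fderiv ℝ φ x0 (Pi.single i 1) else 0)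
          - φstar) :=
      Finset.sum_nonneg fun T _ => mul_nonneg (hP T) (sub_nonneg.mpr (hφstar ▸ hmin _))
    have hprod : 0 ≤ (1 - γ / Λ) * (φ x0 - φstar) := le_trans h0 (claimA x0)
    by_contra hcon
    push_neg at hcon
    nlinarith [hprod, hC]
  -- iterates as deterministic functions of the samplings
  have hYX : ∀ k ω, X k ω = nsyncY w φ x0 k (fun j => S j ω) := by
    intro k
    induction k with
    | zero => intro ω; rw [hX0]; rfl
    | succ k ih =>
      intro ω
      rw [hXrec k ω, ih ω]
      simp only [nsyncY, Fin.coe_castSucc, Fin.val_last]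
  -- expected suboptimality after k steps
  set E : ℕ → ℝ := fun k => ∑ t : Fin k → Finset (Fin n),
    (∏ j, P (t j)) * (φ (nsyncY w φ x0 k t) - φstar) with hE
  have hE0 : E 0 = φ x0 - φstar := by
    simp [hE, nsyncY]
  have hstep : ∀ (k : ℕ) (t : Fin k → Finset (Fin n)) (a : Finset (Fin n)),
      nsyncY w φ x0 (k+1) (Fin.snoc t a : Fin (k+1) → Finset (Fin n)) = (nsyncY w φ x0 k t) +
        fun i => if i ∈ a then
          -(1 / w i) * fderiv ℝ φ (nsyncY w φ x0 k t) (Pi.single i 1) else 0 := by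
    intro k t a
    simp only [nsyncY, Fin.snoc_castSucc, Fin.snoc_last]
  have hprodsnoc : ∀ (k : ℕ) (t : Fin k → Finset (Fin n)) (a : Finset (Fin n)),
      (∏ j : Fin (k+1), P ((Fin.snoc t a : Fin (k+1) → Finset (Fin n)) j)) = (∏ j, P (t j)) * P a := by
    intro k t a
    rw [Fin.prod_univ_castSucc]
    simp
  have hErec : ∀ k, E (k+1) ≤ (1 - γ / Λ) * E k := by
    intro k
    have hEsucc : E (k+1) = ∑ t : Fin k → Finset (Fin n), (∏ j, P (t j)) *
        ∑ a : Finset (Fin n), P a *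
          (φ ((nsyncY w φ x0 k t) + fun i => if i ∈ a then
            -(1 / w i) * fderiv ℝ φ (nsyncY w φ x0 k t) (Pi.single i 1) else 0) - φstar) := by
      simp only [hE]
      rw [← Equiv.sum_comp (Fin.snocEquiv (fun _ => Finset (Fin n)))
        (fun t => (∏ j, P (t j)) * (φ (nsyncY w φ x0 (k+1) t) - φstar)),
        Fintype.sum_prod_type]
      rw [Finset.sum_comm]
      refine Finset.sum_congr rfl fun t _ => ?_
      rw [Finset.mul_sum]
      refine Finset.sum_congr rfl fun a _ => ?_
      have he : (Fin.snocEquiv (fun _ => Finset (Fin n))) (a, t) = Fin.snoc t a := by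
        funext j; rfl
      rw [he, hprodsnoc k t a, hstep k t a]
      ring
    rw [hEsucc, hE, Finset.mul_sum]
    refine Finset.sum_le_sum fun t _ => ?_
    have hh := mul_le_mul_of_nonneg_left (claimA (nsyncY w φ x0 k t))
      (Finset.prod_nonneg fun j _ => hP (t j) : (0:ℝ) ≤ ∏ j, P (t j))
    calc (∏ j, P (t j)) * ∑ a : Finset (Fin n), P a *
          (φ ((nsyncY w φ x0 k t) + fun i => if i ∈ a then
            -(1 / w i) * fderiv ℝ φ (nsyncY w φ x0 k t) (Pi.single i 1) else 0) - φstar)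
        ≤ (∏ j, P (t j)) * ((1 - γ / Λ) * (φ (nsyncY w φ x0 k t) - φstar)) := hh
      _ = (1 - γ / Λ) * ((∏ j, P (t j)) * (φ (nsyncY w φ x0 k t) - φstar)) := by ring
  have hEk : ∀ k, E k ≤ (1 - γ / Λ)^k * (φ x0 - φstar) := by
    intro k
    induction k with
    | zero => simp [hE0]
    | succ k ih =>
      calc E (k+1) ≤ (1 - γ / Λ) * E k := hErec k
        _ ≤ (1 - γ / Λ) * ((1 - γ / Λ)^k * (φ x0 - φstar)) :=
            mul_le_mul_of_nonneg_left ih h01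
        _ = (1 - γ / Λ)^(k+1) * (φ x0 - φstar) := by ring
  -- exponential bound
  have hpow : (1 - γ / Λ)^K ≤ Real.exp (-(γ / Λ) * K) := by
    have h1 : 1 - γ / Λ ≤ Real.exp (-(γ / Λ)) := by
      linarith [Real.add_one_le_exp (-(γ / Λ))]
    calc (1 - γ / Λ)^K ≤ (Real.exp (-(γ / Λ)))^K := pow_le_pow_left₀ h01 h1 K
      _ = Real.exp ((K : ℝ) * -(γ / Λ)) := (Real.exp_nat_mul _ K).symm
      _ = Real.exp (-(γ / Λ) * K) := by rw [mul_comm]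
  have hloggood : -(γ / Λ) * K ≤ Real.log ((ε * ρ) / (φ x0 - φstar)) := by
    have hm := mul_le_mul_of_nonneg_left hK (le_of_lt (div_pos hγ hΛpos))
    have heq : (γ / Λ) * ((Λ / γ) * Real.log ((φ x0 - φstar) / (ε * ρ)))
        = Real.log ((φ x0 - φstar) / (ε * ρ)) := by
      field_simp
    rw [heq] at hm
    have hneg : Real.log ((ε * ρ) / (φ x0 - φstar))
        = - Real.log ((φ x0 - φstar) / (ε * ρ)) := by
      rw [← Real.log_inv, inv_div]
    rw [hneg]
    linarith
  have hexp2 : Real.exp (-(γ / Λ) * K) ≤ (ε * ρ) / (φ x0 - φstar) := by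
    have hpos : 0 < (ε * ρ) / (φ x0 - φstar) := div_pos (mul_pos hε hρ0) hC
    calc Real.exp (-(γ / Λ) * K) ≤ Real.exp (Real.log ((ε * ρ) / (φ x0 - φstar))) :=
        Real.exp_le_exp.mpr hloggood
      _ = (ε * ρ) / (φ x0 - φstar) := Real.exp_log hpos
  have hEK : E K ≤ ε * ρ := by
    calc E K ≤ (1 - γ / Λ)^K * (φ x0 - φstar) := hEk K
      _ ≤ ((ε * ρ) / (φ x0 - φstar)) * (φ x0 - φstar) :=
          mul_le_mul_of_nonneg_right (le_trans hpow hexp2) hC.le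
      _ = ε * ρ := by field_simp
  -- Markov inequality (discrete form)
  set bad : Finset (Fin K → Finset (Fin n)) :=
    Finset.univ.filter (fun t => ε < φ (nsyncY w φ x0 K t) - φstar) with hbaddef
  have hbad : ∑ t ∈ bad, ∏ j, P (t j) ≤ ρ := by
    have h1 : ε * ∑ t ∈ bad, ∏ j, P (t j) ≤ E K := by
      rw [Finset.mul_sum]
      calc ∑ t ∈ bad, ε * ∏ j, P (t j)
          ≤ ∑ t ∈ bad, (∏ j, P (t j)) * (φ (nsyncY w φ x0 K t) - φstar) := by
            refine Finset.sum_le_sum fun t ht => ?_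
            have hbt : ε < φ (nsyncY w φ x0 K t) - φstar :=
              (Finset.mem_filter.mp ht).2
            have hp0 : (0:ℝ) ≤ ∏ j, P (t j) := Finset.prod_nonneg fun j _ => hP _
            nlinarith
        _ ≤ E K := by
            rw [hE]
            refine Finset.sum_le_sum_of_subset_of_nonneg (Finset.filter_subset _ _)
              fun t _ _ => mul_nonneg (Finset.prod_nonneg fun j _ => hP _)
                (sub_nonneg.mpr (hφstar ▸ hmin _))
    exact le_of_mul_le_mul_left (le_trans h1 hEK) hε
  -- measure of each elementary event via independence
  have hmeasE : ∀ t : Fin K → Finset (Fin n),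
      μpr {ω | ∀ j : Fin K, S j ω = t j} = ∏ j : Fin K, ENNReal.ofReal (P (t j)) := by
    intro t
    set t' : ℕ → Finset (Fin n) := fun m => if h : m < K then t ⟨m, h⟩ else ∅ with ht'
    have hset : {ω | ∀ j : Fin K, S j ω = t j} = ⋂ m ∈ Finset.range K, S m ⁻¹' {t' m} := by
      ext ω
      simp only [Set.mem_setOf_eq, Set.mem_iInter, Set.mem_preimage, Set.mem_singleton_iff,
        Finset.mem_range]
      constructor
      · intro h m hm
        rw [ht']
        simp only [dif_pos hm]
        exact h ⟨m, hm⟩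
      · intro h j
        have hj := h j.1 j.2
        rw [ht'] at hj
        simpa only [dif_pos j.2, Fin.eta] using hj
    have hind2 := hind.meas_biInter (S := Finset.range K) (s := fun m => S m ⁻¹' {t' m})
      (fun m _ => ⟨{t' m}, trivial, rfl⟩)
    rw [hset, hind2]
    have hsingle : ∀ m, μpr (S m ⁻¹' {t' m}) = ENNReal.ofReal (P (t' m)) := by
      intro m
      have h1 : (μpr {ω | S m ω = t' m}).toReal = P (t' m) := hlaw m (t' m)
      have h2 : μpr {ω | S m ω = t' m} ≠ ⊤ := measure_ne_top _ _
      have h3 : S m ⁻¹' {t' m} = {ω | S m ω = t' m} := rfl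
      rw [h3, ← h1, ENNReal.ofReal_toReal h2]
    rw [Finset.prod_congr rfl fun m _ => hsingle m,
      ← Fin.prod_univ_eq_prod_range (fun m => ENNReal.ofReal (P (t' m))) K]
    refine Finset.prod_congr rfl fun j _ => ?_
    congr 1
    rw [ht']
    simp only [dif_pos j.2, Fin.eta]
  -- bound the failure probability
  have hsub : {ω | φ (X K ω) - φstar ≤ ε}ᶜ ⊆
      ⋃ t ∈ bad, {ω | ∀ j : Fin K, S j ω = t j} := by
    intro ω hω
    simp only [Set.mem_compl_iff, Set.mem_setOf_eq, not_le] at hω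
    refine Set.mem_iUnion₂.mpr ⟨fun j => S j ω, ?_, fun j => rfl⟩
    rw [hbaddef]
    simp only [Finset.mem_filter, Finset.mem_univ, true_and]
    rw [hYX K ω] at hω
    exact hω
  have hAc : μpr {ω | φ (X K ω) - φstar ≤ ε}ᶜ ≤ ENNReal.ofReal ρ := by
    calc μpr {ω | φ (X K ω) - φstar ≤ ε}ᶜ
        ≤ μpr (⋃ t ∈ bad, {ω | ∀ j : Fin K, S j ω = t j}) := measure_mono hsub
      _ ≤ ∑ t ∈ bad, μpr {ω | ∀ j : Fin K, S j ω = t j} := measure_biUnion_finset_le _ _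
      _ = ∑ t ∈ bad, ENNReal.ofReal (∏ j, P (t j)) := by
          refine Finset.sum_congr rfl fun t _ => ?_
          rw [hmeasE t, ENNReal.ofReal_prod_of_nonneg (fun j _ => hP _)]
      _ = ENNReal.ofReal (∑ t ∈ bad, ∏ j, P (t j)) :=
          (ENNReal.ofReal_sum_of_nonneg fun t _ => Finset.prod_nonneg fun j _ => hP _).symm
      _ ≤ ENNReal.ofReal ρ := ENNReal.ofReal_le_ofReal hbad
  -- conclude
  have huniv : (1 : ENNReal) ≤ μpr {ω | φ (X K ω) - φstar ≤ ε}
      + μpr {ω | φ (X K ω) - φstar ≤ ε}ᶜ := by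
    have h := measure_union_le (μ := μpr) {ω | φ (X K ω) - φstar ≤ ε}
      {ω | φ (X K ω) - φstar ≤ ε}ᶜ
    rwa [Set.union_compl_self, measure_univ] at h
  have hAcr : (μpr {ω | φ (X K ω) - φstar ≤ ε}ᶜ).toReal ≤ ρ := by
    have h := ENNReal.toReal_mono ENNReal.ofReal_ne_top hAc
    rwa [ENNReal.toReal_ofReal hρ0.le] at h
  have h1r : (1:ℝ) ≤ (μpr {ω | φ (X K ω) - φstar ≤ ε}).toReal
      + (μpr {ω | φ (X K ω) - φstar ≤ ε}ᶜ).toReal := by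
    have h := ENNReal.toReal_mono
      (ENNReal.add_ne_top.mpr ⟨measure_ne_top _ _, measure_ne_top _ _⟩) huniv
    rwa [ENNReal.toReal_one, ENNReal.toReal_add (measure_ne_top _ _) (measure_ne_top _ _)] at h
  linarith
end

section
/- Suppose for each j = 1,…,c a random set Ŝ_j ⊆ [n] and a function φ satisfy E[φ(x + h_[Ŝ_j])] ≤ φ(x) + (τ/|S_j|)(⟨∇φ(x), h_[S_j]⟩ + (β_j/2)‖h_[S_j]‖_u²) for all x, h, where β_j = 1 + (τ−1)(ω_j−1)/max{1, |S_j|−1} and u > 0. Let Ŝ be the mixture sampling: pick j with probability q_j then draw Ŝ_j. Then E[φ(x + h_[Ŝ])] ≤ φ(x) + ⟨∇φ(x), h⟩_p + (1/2)‖h‖²_{p•w} holds with p_i = ∑_j q_j (τ/|S_j|) δ_{ij} and any w_i ≥ (u_i/p_i)·∑_j q_j (τ/|S_j|) δ_{ij} β_j. -/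
/-- mixture ESO composition, Theorem 2 of the NSync paper:
if each component sampling Ŝ_j satisfies a τ-nice-type ESO on the set S_j,
then the mixture sampling satisfies the nonuniform ESO with marginals p and
any stepsize weights w ≥ w*. -/
theorem nsync_mixture_eso
    (n c τ : ℕ)
    (S : Fin c → Finset (Fin n)) (hcover : ∀ i : Fin n, ∃ j, i ∈ S j)
    (ω : Fin c → ℕ)
    (q : Fin c → ℝ) (hq : ∀ j, 0 < q j) (hqsum : ∑ j, q j = 1)
    (Pj : Fin c → Finset (Fin n) → ℝ)
    (hPj : ∀ j T, 0 ≤ Pj j T) (hPjsum : ∀ j, ∑ T : Finset (Fin n), Pj j T = 1)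
    (u : Fin n → ℝ) (hu : ∀ i, 0 < u i)
    (φ : (Fin n → ℝ) → ℝ) (hφ : Differentiable ℝ φ)
    (β : Fin c → ℝ)
    (hβ : ∀ j, β j = 1 + ((τ : ℝ) - 1) * ((ω j : ℝ) - 1) / max 1 (((S j).card : ℝ) - 1))
    (hESOj : ∀ (j : Fin c) (x h : Fin n → ℝ),
      (∑ T : Finset (Fin n), Pj j T * φ (x + fun i => if i ∈ T then h i else 0))
        ≤ φ x + ((τ : ℝ) / (S j).card) *
            ((∑ i ∈ S j, fderiv ℝ φ x (Pi.single i 1) * h i)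
              + β j / 2 * ∑ i ∈ S j, u i * h i ^ 2))
    (P : Finset (Fin n) → ℝ) (hPdef : ∀ T, P T = ∑ j, q j * Pj j T)
    (p : Fin n → ℝ)
    (hpdef : ∀ i, p i = ∑ j, q j * ((τ : ℝ) / (S j).card) * (if i ∈ S j then 1 else 0))
    (hp : ∀ i, 0 < p i)
    (w : Fin n → ℝ)
    (hw : ∀ i, w i ≥ (u i / p i) *
      ∑ j, q j * ((τ : ℝ) / (S j).card) * (if i ∈ S j then 1 else 0) * β j) :
    ∀ x h : Fin n → ℝ,
      (∑ T : Finset (Fin n), P T * φ (x + fun i => if i ∈ T then h i else 0))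
        ≤ φ x + (∑ i, p i * fderiv ℝ φ x (Pi.single i 1) * h i)
            + 1 / 2 * ∑ i, (p i * w i) * h i ^ 2 := by
  intro x h
  set D : Fin n → ℝ := fun i => fderiv ℝ φ x (Pi.single i 1) with hD
  set F : Finset (Fin n) → ℝ :=
    fun T => φ (x + fun i => if i ∈ T then h i else 0) with hF
  have hswap : ∀ (a : Fin c → ℝ) (g : Fin n → ℝ),
      (∑ j, a j * ∑ i ∈ S j, g i)
        = ∑ i, (∑ j, a j * (if i ∈ S j then 1 else 0)) * g i := by
    intro a g
    have hrw : ∀ j, ∑ i ∈ S j, g i = ∑ i, if i ∈ S j then g i else 0 := by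
      intro j
      rw [Finset.sum_ite_mem, Finset.univ_inter]
    simp_rw [hrw, Finset.mul_sum, Finset.sum_mul]
    rw [Finset.sum_comm]
    refine Finset.sum_congr rfl fun i _ => Finset.sum_congr rfl fun j _ => ?_
    split_ifs <;> ring
  have key : (∑ T : Finset (Fin n), P T * F T)
      = ∑ j, q j * ∑ T : Finset (Fin n), Pj j T * F T := by
    simp_rw [hPdef, Finset.sum_mul, Finset.mul_sum]
    rw [Finset.sum_comm]
    exact Finset.sum_congr rfl fun j _ => Finset.sum_congr rfl fun T _ => by ring
  rw [key]
  have step1 : ∑ j, q j * ∑ T : Finset (Fin n), Pj j T * F T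
      ≤ ∑ j, q j * (φ x + ((τ : ℝ) / (S j).card) *
          ((∑ i ∈ S j, D i * h i) + β j / 2 * ∑ i ∈ S j, u i * h i ^ 2)) := by
    refine Finset.sum_le_sum fun j _ => ?_
    exact mul_le_mul_of_nonneg_left (hESOj j x h) (hq j).le
  refine step1.trans ?_
  have lhs_eq : ∑ j, q j * (φ x + ((τ : ℝ) / (S j).card) *
          ((∑ i ∈ S j, D i * h i) + β j / 2 * ∑ i ∈ S j, u i * h i ^ 2))
      = φ x + (∑ j, (q j * ((τ : ℝ) / (S j).card)) * ∑ i ∈ S j, D i * h i)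
        + ∑ j, (q j * ((τ : ℝ) / (S j).card) * (β j / 2)) *
            ∑ i ∈ S j, u i * h i ^ 2 := by
    have : ∀ j ∈ Finset.univ, q j * (φ x + ((τ : ℝ) / (S j).card) *
            ((∑ i ∈ S j, D i * h i) + β j / 2 * ∑ i ∈ S j, u i * h i ^ 2))
        = q j * φ x + (q j * ((τ : ℝ) / (S j).card)) * ∑ i ∈ S j, D i * h i
          + (q j * ((τ : ℝ) / (S j).card) * (β j / 2)) *
              ∑ i ∈ S j, u i * h i ^ 2 := fun j _ => by ring
    rw [Finset.sum_congr rfl this, Finset.sum_add_distrib, Finset.sum_add_distrib,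
      ← Finset.sum_mul, hqsum, one_mul]
  rw [lhs_eq, hswap, hswap]
  have term1 : (∑ i, (∑ j, q j * ((τ : ℝ) / (S j).card) * (if i ∈ S j then 1 else 0))
        * (D i * h i)) = ∑ i, p i * D i * h i := by
    refine Finset.sum_congr rfl fun i _ => ?_
    rw [hpdef i]; ring
  rw [term1]
  have term2 : (∑ i, (∑ j, q j * ((τ : ℝ) / (S j).card) * (β j / 2) *
        (if i ∈ S j then 1 else 0)) * (u i * h i ^ 2))
      ≤ 1 / 2 * ∑ i, (p i * w i) * h i ^ 2 := by
    rw [Finset.mul_sum]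
    refine Finset.sum_le_sum fun i _ => ?_
    have hA : (∑ j, q j * ((τ : ℝ) / (S j).card) * (β j / 2) *
          (if i ∈ S j then 1 else 0))
        = (1 / 2) * ∑ j, q j * ((τ : ℝ) / (S j).card) *
            (if i ∈ S j then 1 else 0) * β j := by
      rw [Finset.mul_sum]
      exact Finset.sum_congr rfl fun j _ => by ring
    have hwi : u i * (∑ j, q j * ((τ : ℝ) / (S j).card) *
          (if i ∈ S j then 1 else 0) * β j) ≤ p i * w i := by
      have := mul_le_mul_of_nonneg_left (hw i) (hp i).le
      calc u i * (∑ j, q j * ((τ : ℝ) / (S j).card) *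
              (if i ∈ S j then 1 else 0) * β j)
          = p i * ((u i / p i) * ∑ j, q j * ((τ : ℝ) / (S j).card) *
              (if i ∈ S j then 1 else 0) * β j) := by
            rw [← mul_assoc, mul_div_cancel₀ _ (hp i).ne']
        _ ≤ p i * w i := this
    calc (∑ j, q j * ((τ : ℝ) / (S j).card) * (β j / 2) *
            (if i ∈ S j then 1 else 0)) * (u i * h i ^ 2)
        = (1 / 2) * ((u i * ∑ j, q j * ((τ : ℝ) / (S j).card) *
            (if i ∈ S j then 1 else 0) * β j) * h i ^ 2) := by rw [hA]; ring
      _ ≤ (1 / 2) * ((p i * w i) * h i ^ 2) := by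
          have := mul_le_mul_of_nonneg_right hwi (sq_nonneg (h i))
          linarith
      _ = 1 / 2 * ((p i * w i) * h i ^ 2) := rfl
  linarith [term2]
end
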